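/- Let G ∈ ℝ^{N×N} be symmetric and positive semidefinite, let t₀ > 0, and let q : [t₀, ∞) → ℝ^N be a trajectory of the NAGD game dynamics q''(t) + (3/t) q'(t) + G q(t) = 0, with v = q'. Define V(t) = (t²/2)·q(t)ᵀ G q(t) + (1/2)·‖t·v(t) + 2·q(t)‖₂². Then: (a) V(t) ≥ 0 for all t ≥ t₀; (b) V is differentiable with V'(t) = −t·q(t)ᵀ G q(t) ≤ 0 for all t ≥ t₀; (c) V is nonincreasing and ∫_{t₀}^∞ t·q(t)ᵀ G q(t) dt ≤ V(t₀) < ∞. -/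

import Mathlib

open Filter MeasureTheory

/-- NAGD game dynamics: `q` is a twice continuously differentiable trajectory with
velocity `v = q'` satisfying `q'' + (3/t) q' + G q = 0` on `[t₀, ∞)`. -/
def IsNAGDTrajectory {N : ℕ} (G : Matrix (Fin N) (Fin N) ℝ) (t₀ : ℝ)
    (q v : ℝ → Fin N → ℝ) : Prop :=
  (∀ t, t₀ ≤ t → HasDerivAt q (v t) t) ∧
  (∀ t, t₀ ≤ t → HasDerivAt v (-(3 / t) • v t - G.mulVec (q t)) t)

/-- for `G` symmetric positive semidefinite and the Lyapunov function
`V(t) = (t²/2) q(t)ᵀ G q(t) + (1/2) ‖t v(t) + 2 q(t)‖₂²` along an NAGD trajectory: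
(a) `V ≥ 0`; (b) `V'(t) = -t q(t)ᵀ G q(t) ≤ 0`; (c) `V` is nonincreasing on `[t₀, ∞)` and
`∫_{t₀}^∞ t q(t)ᵀ G q(t) dt ≤ V(t₀) < ∞`. -/
theorem stmt_16 {N : ℕ} (G : Matrix (Fin N) (Fin N) ℝ)
    (hsymm : G.transpose = G)
    (hpsd : ∀ x : Fin N → ℝ, 0 ≤ dotProduct x (G.mulVec x))
    (t₀ : ℝ) (ht₀ : 0 < t₀)
    (q v : ℝ → Fin N → ℝ) (htraj : IsNAGDTrajectory G t₀ q v)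
    (V : ℝ → ℝ)
    (hV : V = fun t => t ^ 2 / 2 * dotProduct (q t) (G.mulVec (q t)) +
      (1 / 2) * ∑ i, (t * v t i + 2 * q t i) ^ 2) :
    (∀ t, t₀ ≤ t → 0 ≤ V t) ∧
    (∀ t, t₀ ≤ t →
      HasDerivAt V (-(t * dotProduct (q t) (G.mulVec (q t)))) t ∧
      -(t * dotProduct (q t) (G.mulVec (q t))) ≤ 0) ∧
    AntitoneOn V (Set.Ici t₀) ∧
    IntegrableOn (fun t => t * dotProduct (q t) (G.mulVec (q t))) (Set.Ici t₀) ∧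
    ∫ t in Set.Ici t₀, t * dotProduct (q t) (G.mulVec (q t)) ≤ V t₀ := by
  obtain ⟨hq, hv⟩ := htraj
  -- expansion of the quadratic form as a double sum
  have hdotsum : ∀ x y : Fin N → ℝ,
      dotProduct x (G.mulVec y) = ∑ i, ∑ j, G i j * x i * y j := by
    intro x y
    simp only [dotProduct, Matrix.mulVec, Finset.mul_sum]
    exact Finset.sum_congr rfl fun i _ => Finset.sum_congr rfl fun j _ => by ring
  have hG : ∀ i j, G j i = G i j := by
    intro i j
    conv_rhs => rw [← hsymm]
    rfl
  -- part (a)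
  have ha : ∀ t, t₀ ≤ t → 0 ≤ V t := by
    intro t ht
    rw [hV]
    have h1 : (0:ℝ) ≤ t ^ 2 / 2 * dotProduct (q t) (G.mulVec (q t)) :=
      mul_nonneg (by positivity) (hpsd _)
    have h2 : (0:ℝ) ≤ (1/2 : ℝ) * ∑ i, (t * v t i + 2 * q t i) ^ 2 := by positivity
    exact add_nonneg h1 h2
  -- key derivative fact
  have key : ∀ t, t₀ ≤ t →
      HasDerivAt V (-(t * dotProduct (q t) (G.mulVec (q t)))) t := by
    intro t ht
    have ht0 : t ≠ 0 := (lt_of_lt_of_le ht₀ ht).ne'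
    have hqi : ∀ i, HasDerivAt (fun s => q s i) (v t i) t :=
      fun i => hasDerivAt_pi.1 (hq t ht) i
    have hvi : ∀ i, HasDerivAt (fun s => v s i)
        (-(3 / t) * v t i - G.mulVec (q t) i) t := by
      intro i
      have h := hasDerivAt_pi.1 (hv t ht) i
      simpa using h
    -- derivative of the double sum
    have hD : HasDerivAt (fun s => ∑ i, ∑ j, G i j * q s i * q s j)
        (∑ i, ∑ j, (G i j * v t i * q t j + G i j * q t i * v t j)) t := by
      apply HasDerivAt.fun_sum
      intro i _
      apply HasDerivAt.fun_sum
      intro j _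
      exact ((hqi i).const_mul (G i j)).mul (hqi j)
    -- derivative of each square term
    have hterm : ∀ i, HasDerivAt (fun s => (s * v s i + 2 * q s i) ^ 2)
        (2 * (t * v t i + 2 * q t i) * (-t * G.mulVec (q t) i)) t := by
      intro i
      have h := (((hasDerivAt_id t).fun_mul (hvi i)).fun_add ((hqi i).const_mul 2)).fun_pow 2
      refine h.congr_deriv ?_
      simp only [id_eq, pow_one, Nat.cast_ofNat]
      field_simp
      ring
    have hS : HasDerivAt (fun s => ∑ i, (s * v s i + 2 * q s i) ^ 2)
        (∑ i, 2 * (t * v t i + 2 * q t i) * (-t * G.mulVec (q t) i)) t :=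
      HasDerivAt.fun_sum fun i _ => hterm i
    have hP : HasDerivAt (fun s => s ^ 2 / 2 * ∑ i, ∑ j, G i j * q s i * q s j)
        ((2 * t ^ (2-1) / 2) * (∑ i, ∑ j, G i j * q t i * q t j) +
          t ^ 2 / 2 * (∑ i, ∑ j, (G i j * v t i * q t j + G i j * q t i * v t j))) t := by
      have := ((hasDerivAt_pow 2 t).div_const 2).fun_mul hD
      simpa using this
    have hfull := hP.fun_add (HasDerivAt.const_mul (1/2 : ℝ) hS)
    have hVeq : V = fun s => s ^ 2 / 2 * (∑ i, ∑ j, G i j * q s i * q s j) +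
        (1 / 2) * ∑ i, (s * v s i + 2 * q s i) ^ 2 := by
      rw [hV]
      funext s
      rw [hdotsum]
    rw [hVeq]
    refine hfull.congr_deriv ?_
    -- now an equality of real numbers
    have h1 : (∑ i, ∑ j, G i j * q t i * q t j)
        = dotProduct (q t) (G.mulVec (q t)) := (hdotsum _ _).symm
    have h2 : (∑ i, ∑ j, (G i j * v t i * q t j + G i j * q t i * v t j))
        = 2 * dotProduct (v t) (G.mulVec (q t)) := by
      have hA : (∑ i, ∑ j, G i j * v t i * q t j)
          = dotProduct (v t) (G.mulVec (q t)) := (hdotsum _ _).symm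
      have hB : (∑ i, ∑ j, G i j * q t i * v t j)
          = dotProduct (v t) (G.mulVec (q t)) := by
        rw [Finset.sum_comm, hdotsum]
        exact Finset.sum_congr rfl fun i _ => Finset.sum_congr rfl fun j _ => by
          rw [hG i j]; ring
      simp only [Finset.sum_add_distrib]
      rw [hA, hB]
      ring
    have h3 : (∑ i, 2 * (t * v t i + 2 * q t i) * (-t * G.mulVec (q t) i))
        = -(2*t^2) * dotProduct (v t) (G.mulVec (q t))
          + -(4*t) * dotProduct (q t) (G.mulVec (q t)) := by
      simp only [dotProduct, Finset.mul_sum, ← Finset.sum_add_distrib]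
      exact Finset.sum_congr rfl fun i _ => by ring
    rw [h1, h2, h3]
    norm_num
    ring
  -- nonpositivity of the derivative value
  have hnonpos : ∀ t, t₀ ≤ t →
      -(t * dotProduct (q t) (G.mulVec (q t))) ≤ 0 := by
    intro t ht
    have : 0 ≤ t * dotProduct (q t) (G.mulVec (q t)) :=
      mul_nonneg (le_trans ht₀.le ht) (hpsd _)
    linarith
  -- antitone
  have hcont : ContinuousOn V (Set.Ici t₀) :=
    fun x hx => (key x hx).continuousAt.continuousWithinAt
  have hanti : AntitoneOn V (Set.Ici t₀) := by
    apply antitoneOn_of_deriv_nonpos (convex_Ici t₀) hcont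
    · intro x hx
      rw [interior_Ici] at hx
      exact (key x (le_of_lt hx)).differentiableAt.differentiableWithinAt
    · intro x hx
      rw [interior_Ici] at hx
      rw [(key x hx.le).deriv]
      exact hnonpos x hx.le
  -- continuity of the integrand
  set f : ℝ → ℝ := fun t => t * dotProduct (q t) (G.mulVec (q t)) with hf
  have hcontdot : Continuous (fun y : Fin N → ℝ => dotProduct y (G.mulVec y)) := by
    simp only [hdotsum]
    exact continuous_finset_sum _ fun i _ => continuous_finset_sum _ fun j _ =>
      (continuous_const.mul (continuous_apply i)).mul (continuous_apply j)
  have hfc : ContinuousOn f (Set.Ici t₀) := by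
    intro x hx
    have hqc : ContinuousAt q x := (hq x hx).continuousAt
    exact (continuousAt_id.mul (hcontdot.continuousAt.comp hqc)).continuousWithinAt
  have hfnn : ∀ x, t₀ ≤ x → 0 ≤ f x :=
    fun x hx => mul_nonneg (le_trans ht₀.le hx) (hpsd _)
  -- FTC on finite intervals
  have hFTC : ∀ b, t₀ ≤ b → ∫ x in t₀..b, f x = V t₀ - V b := by
    intro b hb
    have hderiv : ∀ x ∈ Set.uIcc t₀ b, HasDerivAt V (-(f x)) x := by
      intro x hx
      rw [Set.uIcc_of_le hb] at hx
      exact key x hx.1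
    have hintg : IntervalIntegrable (fun x => -(f x)) volume t₀ b := by
      apply ContinuousOn.intervalIntegrable
      apply ContinuousOn.neg
      apply hfc.mono
      rw [Set.uIcc_of_le hb]
      exact fun x hx => hx.1
    have h := intervalIntegral.integral_eq_sub_of_hasDerivAt hderiv hintg
    rw [intervalIntegral.integral_neg] at h
    linarith
  have hbound : ∀ b, t₀ ≤ b → ∫ x in t₀..b, f x ≤ V t₀ := by
    intro b hb
    rw [hFTC b hb]
    have := ha b hb
    linarith
  -- integrability on Ioi
  have hIoc : ∀ b : ℝ, IntegrableOn f (Set.Ioc t₀ b) := by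
    intro b
    rcases le_or_gt t₀ b with hb | hb
    · exact ((hfc.mono (Set.Icc_subset_Ici_self)).integrableOn_Icc).mono_set
        Set.Ioc_subset_Icc_self
    · rw [Set.Ioc_eq_empty (by linarith)]
      exact integrableOn_empty
  have hIoi : IntegrableOn f (Set.Ioi t₀) := by
    apply MeasureTheory.integrableOn_Ioi_of_intervalIntegral_norm_bounded
      (V t₀) t₀ hIoc (tendsto_id (α := ℝ))
    filter_upwards [eventually_ge_atTop t₀] with b hb
    have heq : ∫ x in t₀..b, ‖f x‖ = ∫ x in t₀..b, f x := by
      apply intervalIntegral.integral_congr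
      intro x hx
      rw [Set.uIcc_of_le hb] at hx
      exact Real.norm_of_nonneg (hfnn x hx.1)
    rw [heq]
    exact hbound b hb
  have hIci : IntegrableOn f (Set.Ici t₀) :=
    (integrableOn_Ici_iff_integrableOn_Ioi (f := f)).2 hIoi
  -- the integral bound
  have hintle : ∫ t in Set.Ici t₀, f t ≤ V t₀ := by
    rw [MeasureTheory.integral_Ici_eq_integral_Ioi]
    have htend := MeasureTheory.intervalIntegral_tendsto_integral_Ioi t₀ hIoi
      (tendsto_id (α := ℝ))
    apply le_of_tendsto htend
    filter_upwards [eventually_ge_atTop t₀] with b hb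
    exact hbound b hb
  exact ⟨ha, fun t ht => ⟨key t ht, hnonpos t ht⟩, hanti, hIci, hintle⟩
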